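/- For every a ≠ 0 and every x ∈ (0,1), ((e^{ax} - 1)(e^{a} - e^{ax})) / (a (e^{a} - 1) e^{ax}) < x(1 - x), with equality exactly at x = 0 and x = 1. -/

import Mathlib

open Real Set


lemma pos_of_hasDerivAt (f f' : ℝ → ℝ) (hd : ∀ x : ℝ, HasDerivAt f (f' x) x)
    (h0 : f 0 = 0) (hp : ∀ x : ℝ, 0 < x → 0 < f' x) : ∀ x : ℝ, 0 < x → 0 < f x := by
  intro x hx
  have hmono : StrictMonoOn f (Set.Ici 0) := by
    apply strictMonoOn_of_deriv_pos (convex_Ici 0)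
    · exact fun y _ => (hd y).continuousAt.continuousWithinAt
    · intro y hy
      rw [interior_Ici] at hy
      rw [(hd y).deriv]
      exact hp y hy
  have := hmono Set.self_mem_Ici (le_of_lt hx : (0:ℝ) ≤ x) hx
  rw [h0] at this
  exact this

lemma rho_pos : ∀ u : ℝ, 0 < u → 0 < Real.exp u * (u - 1) + 1 := by
  apply pos_of_hasDerivAt _ (fun u => u * Real.exp u)
  · intro u
    have h : HasDerivAt (fun u : ℝ => Real.exp u * (u - 1) + 1)
        (Real.exp u * (u - 1) + Real.exp u * 1) u :=
      ((Real.hasDerivAt_exp u).mul ((hasDerivAt_id u).sub_const 1)).add_const 1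
    convert h using 1; ring
  · simp
  · intro u hu; positivity

lemma chi_pos : ∀ u : ℝ, 0 < u → 0 < Real.exp u * (u - 2) + u + 2 := by
  apply pos_of_hasDerivAt _ (fun u => Real.exp u * (u - 1) + 1)
  · intro u
    have h : HasDerivAt (fun u : ℝ => Real.exp u * (u - 2) + u + 2)
        (Real.exp u * (u - 2) + Real.exp u * 1 + 1) u :=
      ((((Real.hasDerivAt_exp u).mul ((hasDerivAt_id u).sub_const 2)).add
        (hasDerivAt_id u)).add_const 2)
    convert h using 1; ring
  · norm_num
  · exact rho_pos

section
variable (t : ℝ)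

lemma phi'_pos (ht : 0 < t) : ∀ s : ℝ, 0 < s →
    0 < t * (Real.exp (s+t) - 1) + s * t * Real.exp (s+t)
        - (Real.exp s - 1) * (Real.exp t - 1) - (s+t) * Real.exp s * (Real.exp t - 1) := by
  apply pos_of_hasDerivAt _
    (fun s => Real.exp s * (s * (Real.exp t * (t - 1) + 1) + (Real.exp t * (t - 2) + t + 2)))
  · intro s
    have h1 : HasDerivAt (fun s : ℝ => Real.exp (s + t)) (Real.exp (s + t) * 1) s :=
      ((hasDerivAt_id s).add_const t).exp
    have h2 : HasDerivAt (fun s : ℝ => t * (Real.exp (s+t) - 1)) (t * (Real.exp (s+t) * 1)) s :=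
      (h1.sub_const 1).const_mul t
    have h3 : HasDerivAt (fun s : ℝ => s * t * Real.exp (s+t))
        (1 * t * Real.exp (s+t) + s * t * (Real.exp (s+t) * 1)) s :=
      ((hasDerivAt_id s).mul_const t).mul h1
    have h4 : HasDerivAt (fun s : ℝ => (Real.exp s - 1) * (Real.exp t - 1))
        (Real.exp s * (Real.exp t - 1)) s :=
      ((Real.hasDerivAt_exp s).sub_const 1).mul_const _
    have h5 : HasDerivAt (fun s : ℝ => (s+t) * Real.exp s * (Real.exp t - 1))
        ((1 * Real.exp s + (s+t) * Real.exp s) * (Real.exp t - 1)) s :=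
      (((hasDerivAt_id s).add_const t).mul (Real.hasDerivAt_exp s)).mul_const _
    have h := ((h2.add h3).sub h4).sub h5
    refine h.congr_deriv ?_
    simp only [Real.exp_add]
    ring
  · norm_num
  · intro s hs
    have h1 := rho_pos t ht
    have h2 := chi_pos t ht
    have := Real.exp_pos s
    positivity

lemma phi_pos (ht : 0 < t) : ∀ s : ℝ, 0 < s →
    0 < s * t * (Real.exp (s+t) - 1) - (s+t) * (Real.exp s - 1) * (Real.exp t - 1) := by
  apply pos_of_hasDerivAt _
    (fun s => t * (Real.exp (s+t) - 1) + s * t * Real.exp (s+t)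
        - (Real.exp s - 1) * (Real.exp t - 1) - (s+t) * Real.exp s * (Real.exp t - 1))
  · intro s
    have h1 : HasDerivAt (fun s : ℝ => Real.exp (s + t)) (Real.exp (s + t) * 1) s :=
      ((hasDerivAt_id s).add_const t).exp
    have h3 : HasDerivAt (fun s : ℝ => s * t * (Real.exp (s+t) - 1))
        (1 * t * (Real.exp (s+t) - 1) + s * t * (Real.exp (s+t) * 1)) s :=
      ((hasDerivAt_id s).mul_const t).mul (h1.sub_const 1)
    have h5 : HasDerivAt (fun s : ℝ => (s+t) * (Real.exp s - 1) * (Real.exp t - 1))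
        ((1 * (Real.exp s - 1) + (s+t) * Real.exp s) * (Real.exp t - 1)) s :=
      ((((hasDerivAt_id s).add_const t).mul ((Real.hasDerivAt_exp s).sub_const 1)).mul_const _)
    have h := h3.sub h5
    refine h.congr_deriv ?_
    simp only [Real.exp_add]
    ring
  · norm_num
  · exact phi'_pos t ht
end

lemma keyA (s t : ℝ) (hs : 0 < s) (ht : 0 < t) :
    (s+t) * (Real.exp s - 1) * (Real.exp t - 1) < s * t * (Real.exp (s+t) - 1) := by
  have := phi_pos t ht s hs; linarith

lemma keyB (s t : ℝ) (hs : s < 0) (ht : t < 0) :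
    s * t * (Real.exp (s+t) - 1) < (s+t) * (Real.exp s - 1) * (Real.exp t - 1) := by
  have h := keyA (-s) (-t) (by linarith) (by linarith)
  have hE := (Real.exp_pos s).ne'
  have hF := (Real.exp_pos t).ne'
  rw [show -s + -t = -(s+t) by ring] at h
  rw [Real.exp_neg, Real.exp_neg, Real.exp_neg, Real.exp_add] at h
  rw [Real.exp_add]
  have h2 := mul_lt_mul_of_pos_right h (mul_pos (Real.exp_pos s) (Real.exp_pos t))
  have e1 : -(s + t) * ((Real.exp s)⁻¹ - 1) * ((Real.exp t)⁻¹ - 1) * (Real.exp s * Real.exp t)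
      = -((s+t) * (Real.exp s - 1) * (Real.exp t - 1)) := by field_simp; ring
  have e2 : -s * -t * ((Real.exp s * Real.exp t)⁻¹ - 1) * (Real.exp s * Real.exp t)
      = -(s * t * (Real.exp s * Real.exp t - 1)) := by field_simp; ring
  rw [e1, e2] at h2
  linarith

/-- For a ≠ 0, the quantity ((e^{ax}-1)(e^a-e^{ax}))/(a(e^a-1)e^{ax}) is strictly
below x(1-x) on (0,1), with equality exactly at x = 0 and x = 1. -/
theorem stmt1 (a : ℝ) (ha : a ≠ 0) :
    (∀ x ∈ Ioo (0:ℝ) 1,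
      (Real.exp (a*x) - 1) * (Real.exp a - Real.exp (a*x)) /
        (a * (Real.exp a - 1) * Real.exp (a*x)) < x * (1 - x)) ∧
    (∀ x : ℝ, x = 0 ∨ x = 1 →
      (Real.exp (a*x) - 1) * (Real.exp a - Real.exp (a*x)) /
        (a * (Real.exp a - 1) * Real.exp (a*x)) = x * (1 - x)) := by
  constructor
  · intro x hx
    obtain ⟨hx0, hx1⟩ := hx
    have hx1' : 0 < 1 - x := by linarith
    have hET : Real.exp (a*x) * Real.exp (a*(1-x)) = Real.exp a := by
      rw [← Real.exp_add]; ring_nf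
    have hEpos := Real.exp_pos (a*x)
    rcases lt_or_gt_of_ne ha with hneg | hpos
    · have hD : 0 < a * (Real.exp a - 1) := by
        have : Real.exp a < 1 := by
          calc Real.exp a < Real.exp 0 := Real.exp_lt_exp.mpr hneg
          _ = 1 := Real.exp_zero
        exact mul_pos_of_neg_of_neg hneg (by linarith)
      rw [div_lt_iff₀ (mul_pos hD hEpos), ← hET]
      have key := keyB (a*x) (a*(1-x)) (mul_neg_of_neg_of_pos hneg hx0)
        (mul_neg_of_neg_of_pos hneg hx1')
      rw [show a*x + a*(1-x) = a by ring, ← hET] at key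
      rw [← mul_lt_mul_left_of_neg hneg]
      have h2 := mul_lt_mul_of_pos_right key hEpos
      nlinarith [h2]
    · have hD : 0 < a * (Real.exp a - 1) := by
        have : 1 < Real.exp a := by
          calc (1:ℝ) = Real.exp 0 := Real.exp_zero.symm
          _ < Real.exp a := Real.exp_lt_exp.mpr hpos
        exact mul_pos hpos (by linarith)
      rw [div_lt_iff₀ (mul_pos hD hEpos), ← hET]
      have key := keyA (a*x) (a*(1-x)) (mul_pos hpos hx0) (mul_pos hpos hx1')
      rw [show a*x + a*(1-x) = a by ring, ← hET] at key
      rw [← mul_lt_mul_iff_right₀ hpos]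
      have h2 := mul_lt_mul_of_pos_right key hEpos
      nlinarith [h2]
  · rintro x (rfl | rfl) <;> simp
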